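/- Let n be even, let m be an odd divisor of n, and let L be a latin square of order n indexed by {0,...,n-1}. For an entry (r,c,s) of L define Δ_m(r,c,s) to be the integer of least absolute value congruent to ⌊s/m⌋ − ⌊r/m⌋ − ⌊c/m⌋ modulo n/m. Then for any odd positive integer k and any k-plex K of L, the sum of Δ_m(r,c,s) over all (r,c,s) in K is congruent to n/(2m) modulo n/m. -/

import Mathlib

open scoped Classical

/-- A latin square of order `n`: each symbol occurs exactly once in each row and column. -/
def IsLatinSquare {n : ℕ} (L : Fin n → Fin n → Fin n) : Prop :=
  (∀ i, Function.Bijective fun j => L i j) ∧ (∀ j, Function.Bijective fun i => L i j)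

/-- A `k`-plex of `L`: a set of cells with exactly `k` in each row, `k` in each column,
and each symbol occurring exactly `k` times. -/
def IsPlex {n : ℕ} (L : Fin n → Fin n → Fin n) (k : ℕ) (K : Finset (Fin n × Fin n)) : Prop :=
  (∀ i, (K.filter fun p => p.1 = i).card = k) ∧
  (∀ j, (K.filter fun p => p.2 = j).card = k) ∧
  (∀ s, (K.filter fun p => L p.1 p.2 = s).card = k)

/-- `L` has a transversal, i.e. a `1`-plex. -/
def HasTransversal {n : ℕ} (L : Fin n → Fin n → Fin n) : Prop :=
  ∃ K, IsPlex L 1 K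

lemma sum_div_aux (m : ℕ) (hm : 0 < m) :
    ∀ q : ℕ, 2 * ∑ i ∈ Finset.range (m * q), i / m = m * q * (q - 1) := by
  intro q
  induction q with
  | zero => simp
  | succ q ih =>
    have hrange : m * (q + 1) = m * q + m := by ring
    rw [hrange, Finset.sum_range_add]
    have hterm : ∀ j ∈ Finset.range m, (m * q + j) / m = q := by
      intro j hj
      rw [add_comm, Nat.add_mul_div_left j q hm,
        Nat.div_eq_of_lt (Finset.mem_range.1 hj), zero_add]
    rw [Finset.sum_congr rfl hterm, Finset.sum_const, Finset.card_range, smul_eq_mul,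
      Nat.mul_add, ih]
    rcases q with _ | q
    · simp
    · simp only [Nat.add_sub_cancel]
      ring

theorem stmt2 (n m k : ℕ) (hpos : 0 < n) (hn : Even n) (hm : Odd m) (hmdvd : m ∣ n)
    (L : Fin n → Fin n → Fin n) (hL : IsLatinSquare L) (hk : Odd k) (hkpos : 0 < k)
    (K : Finset (Fin n × Fin n)) (hK : IsPlex L k K) :
    (∑ p ∈ K, Int.bmod ((((L p.1 p.2 : ℕ) / m : ℕ) : ℤ)
        - (((p.1 : ℕ) / m : ℕ) : ℤ) - (((p.2 : ℕ) / m : ℕ) : ℤ)) (n / m))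
      ≡ ((n / (2 * m) : ℕ) : ℤ) [ZMOD ((n / m : ℕ) : ℤ)] := by
  set q : ℕ := n / m with hq
  have hmpos : 0 < m := hm.pos
  have hnmq : n = m * q := (Nat.div_mul_cancel hmdvd).symm.trans (mul_comm _ _)
  have hqeven : Even q := by
    rcases (Nat.even_mul.1 (hnmq ▸ hn)) with h | h
    · exact absurd h (Nat.not_even_iff_odd.2 hm)
    · exact h
  obtain ⟨t, ht⟩ := hqeven
  have hqt : q = 2 * t := by omega
  have hqpos : 0 < q := Nat.div_pos (Nat.le_of_dvd hpos hmdvd) hmpos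
  have htpos : 0 < t := by omega
  have hn2m : n / (2 * m) = t := by
    rw [hnmq, hqt, show m * (2 * t) = 2 * m * t by ring, Nat.mul_div_cancel_left t (by omega)]
  -- the function g
  set g : Fin n → ℤ := fun x => (((x : ℕ) / m : ℕ) : ℤ) with hg
  set T : ℤ := ∑ x : Fin n, g x with hT
  -- key counting lemma
  have key : ∀ (h : Fin n × Fin n → Fin n), (∀ s, (K.filter fun p => h p = s).card = k) →
      ∑ p ∈ K, g (h p) = (k : ℤ) * T := by
    intro h hcard
    have step : ∀ s : Fin n, ∑ p ∈ K.filter (fun p => h p = s), g (h p) = (k : ℤ) * g s := by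
      intro s
      rw [Finset.sum_congr rfl (fun p hp => by rw [(Finset.mem_filter.1 hp).2]),
        Finset.sum_const, hcard s, nsmul_eq_mul]
    calc ∑ p ∈ K, g (h p)
        = ∑ s : Fin n, ∑ p ∈ K.filter (fun p => h p = s), g (h p) :=
          (Finset.sum_fiberwise_of_maps_to (fun p _ => Finset.mem_univ (h p)) _).symm
      _ = ∑ s : Fin n, (k : ℤ) * g s := Finset.sum_congr rfl (fun s _ => step s)
      _ = (k : ℤ) * T := by rw [← Finset.mul_sum]
  have h1 : ∑ p ∈ K, g (L p.1 p.2) = (k : ℤ) * T := key (fun p => L p.1 p.2) hK.2.2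
  have h2 : ∑ p ∈ K, g p.1 = (k : ℤ) * T := key (fun p => p.1) hK.1
  have h3 : ∑ p ∈ K, g p.2 = (k : ℤ) * T := key (fun p => p.2) hK.2.1
  have hsum : ∑ p ∈ K, (g (L p.1 p.2) - g p.1 - g p.2) = -((k : ℤ) * T) := by
    rw [Finset.sum_sub_distrib, Finset.sum_sub_distrib, h1, h2, h3]; ring
  -- bmod congruence
  have hb : (∑ p ∈ K, Int.bmod (g (L p.1 p.2) - g p.1 - g p.2) q)
      ≡ ∑ p ∈ K, (g (L p.1 p.2) - g p.1 - g p.2) [ZMOD ((q : ℕ) : ℤ)] := by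
    show _ % _ = _ % _
    rw [Finset.sum_int_mod, Finset.sum_int_mod K _ (fun p => g (L p.1 p.2) - g p.1 - g p.2)]
    congr 1
    exact Finset.sum_congr rfl fun p _ => Int.bmod_emod
  -- compute T
  have hTS : T = ((∑ i ∈ Finset.range n, i / m : ℕ) : ℤ) := by
    rw [hT, hg, Nat.cast_sum]
    exact Fin.sum_univ_eq_sum_range (fun i => ((i / m : ℕ) : ℤ)) n
  set S : ℕ := ∑ i ∈ Finset.range n, i / m with hS
  have h2S : 2 * S = m * q * (q - 1) := by rw [hS, hnmq]; exact sum_div_aux m hmpos q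
  -- integer version
  have h2SZ : (2 : ℤ) * (S : ℤ) = (m : ℤ) * (q : ℤ) * ((q : ℤ) - 1) := by
    have : ((q : ℕ) : ℤ) - 1 = ((q - 1 : ℕ) : ℤ) := by
      rw [Nat.cast_sub hqpos]; simp
    rw [this]; exact_mod_cast h2S
  have hSZ : (S : ℤ) = (m : ℤ) * (t : ℤ) * (2 * (t : ℤ) - 1) := by
    have hq2 : ((q : ℕ) : ℤ) = 2 * (t : ℤ) := by exact_mod_cast hqt
    apply mul_left_cancel₀ (a := (2 : ℤ)) two_ne_zero
    rw [h2SZ, hq2]; ring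
  -- final arithmetic
  have hfin : (-((k : ℤ) * T)) ≡ ((t : ℕ) : ℤ) [ZMOD ((q : ℕ) : ℤ)] := by
    rw [Int.modEq_iff_dvd]
    obtain ⟨a, ha⟩ := hk
    obtain ⟨b, hb'⟩ := hm
    have hodd : Odd ((k : ℤ) * (m : ℤ) * (2 * (t : ℤ) - 1)) := by
      refine Odd.mul (Odd.mul ?_ ?_) ⟨(t : ℤ) - 1, by ring⟩
      · exact ⟨(a : ℤ), by exact_mod_cast ha⟩
      · exact ⟨(b : ℤ), by exact_mod_cast hb'⟩
    obtain ⟨c, hc⟩ := hodd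
    have hq2 : ((q : ℕ) : ℤ) = 2 * (t : ℤ) := by exact_mod_cast hqt
    refine ⟨c + 1, ?_⟩
    have : (k : ℤ) * T = ((k : ℤ) * (m : ℤ) * (2 * (t : ℤ) - 1)) * (t : ℤ) := by
      rw [hTS, hSZ]; ring
    rw [this, hc, hq2]; ring
  -- assemble
  have hgoal := hb.trans (hsum ▸ hfin)
  rw [hn2m]
  exact hgoal
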